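/- Let K be a positive integer, j ≥ 0 an integer, and a, b, a', b' real numbers, and set Δa := 2πK(a − a') and Δb := 2πK²(b − b'). Then the series Σ_{r=0}^{∞} (i^r/r!) Σ_{l=0}^{r} C(r,l) · F(K, j+2r−l; a', b') · (Δa)^l (Δb)^{r−l} converges absolutely to F(K,j;a,b). Moreover, if |Δa| ≤ π and |Δb| ≤ π, then for every r ≥ 0 the r-th term satisfies |(i^r/r!) Σ_{l=0}^{r} C(r,l) F(K, j+2r−l; a', b') (Δa)^l (Δb)^{r−l}| ≤ (K+1)·(2π)^r / r!. -/

import Mathlib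

/-- The quadratic exponential sum `F(K,j;a,b)`. -/
noncomputable def Fquad (K j : ℕ) (a b : ℝ) : ℂ :=
  1 / (K : ℂ) ^ j * ∑ k ∈ Finset.range (K + 1),
    (k : ℂ) ^ j *
      Complex.exp (2 * Real.pi * Complex.I * ((a * k + b * k ^ 2 : ℝ) : ℂ))

set_option maxHeartbeats 1000000 in
/-- The Taylor expansion (2.11) of `F(K,j;a,b)` about a reference point `(a',b')`:
the series converges absolutely to `F(K,j;a,b)`, and when `|Δa|, |Δb| ≤ π` the
`r`-th term is bounded by `(K+1)(2π)^r/r!`. -/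
theorem Fquad_taylor_expansion (K : ℕ) (hK : 0 < K) (j : ℕ) (a b a' b' : ℝ)
    (Δa Δb : ℝ) (hΔa : Δa = 2 * Real.pi * K * (a - a'))
    (hΔb : Δb = 2 * Real.pi * K ^ 2 * (b - b')) :
    (Summable fun r : ℕ =>
      ‖Complex.I ^ r / (r.factorial : ℂ) *
        ∑ l ∈ Finset.range (r + 1), (r.choose l : ℂ) * Fquad K (j + 2 * r - l) a' b' *
          ((Δa : ℝ) : ℂ) ^ l * ((Δb : ℝ) : ℂ) ^ (r - l)‖) ∧
    HasSum
      (fun r : ℕ =>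
        Complex.I ^ r / (r.factorial : ℂ) *
          ∑ l ∈ Finset.range (r + 1), (r.choose l : ℂ) * Fquad K (j + 2 * r - l) a' b' *
            ((Δa : ℝ) : ℂ) ^ l * ((Δb : ℝ) : ℂ) ^ (r - l))
      (Fquad K j a b) ∧
    (|Δa| ≤ Real.pi → |Δb| ≤ Real.pi → ∀ r : ℕ,
      ‖Complex.I ^ r / (r.factorial : ℂ) *
          ∑ l ∈ Finset.range (r + 1), (r.choose l : ℂ) * Fquad K (j + 2 * r - l) a' b' *
            ((Δa : ℝ) : ℂ) ^ l * ((Δb : ℝ) : ℂ) ^ (r - l)‖ ≤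
        ((K : ℝ) + 1) * (2 * Real.pi) ^ r / (r.factorial : ℝ)) := by
  have hKc : (K : ℂ) ≠ 0 := Nat.cast_ne_zero.2 hK.ne'
  have hKr : (0:ℝ) < K := Nat.cast_pos.2 hK
  set c : ℕ → ℂ := fun k =>
    (k : ℂ) ^ j / (K : ℂ) ^ j *
      Complex.exp (2 * Real.pi * Complex.I * ((a' * k + b' * k ^ 2 : ℝ) : ℂ)) with hc
  set x : ℕ → ℝ := fun k => Δa * (k / K) + Δb * (k / K) ^ 2 with hx
  -- key algebraic identity
  have key : ∀ r : ℕ,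
      (Complex.I ^ r / (r.factorial : ℂ) *
        ∑ l ∈ Finset.range (r + 1), (r.choose l : ℂ) * Fquad K (j + 2 * r - l) a' b' *
          ((Δa : ℝ) : ℂ) ^ l * ((Δb : ℝ) : ℂ) ^ (r - l))
      = ∑ k ∈ Finset.range (K + 1),
          c k * (Complex.I * ((x k : ℝ) : ℂ)) ^ r / (r.factorial : ℂ) := by
    intro r
    have h1 : (Complex.I ^ r / (r.factorial : ℂ) *
        ∑ l ∈ Finset.range (r + 1), (r.choose l : ℂ) * Fquad K (j + 2 * r - l) a' b' *
          ((Δa : ℝ) : ℂ) ^ l * ((Δb : ℝ) : ℂ) ^ (r - l))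
        = ∑ l ∈ Finset.range (r + 1), ∑ k ∈ Finset.range (K + 1),
            Complex.I ^ r / (r.factorial : ℂ) *
              ((r.choose l : ℂ) * ((k : ℂ) ^ (j + 2 * r - l) / (K : ℂ) ^ (j + 2 * r - l) *
                Complex.exp (2 * Real.pi * Complex.I * ((a' * k + b' * k ^ 2 : ℝ) : ℂ))) *
                ((Δa : ℝ) : ℂ) ^ l * ((Δb : ℝ) : ℂ) ^ (r - l)) := by
      rw [Finset.mul_sum]
      refine Finset.sum_congr rfl fun l hl => ?_
      rw [Fquad, Finset.mul_sum, Finset.mul_sum, Finset.sum_mul, Finset.sum_mul,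
        Finset.mul_sum]
      exact Finset.sum_congr rfl fun k hk => by ring
    have h2 : (∑ k ∈ Finset.range (K + 1),
          c k * (Complex.I * ((x k : ℝ) : ℂ)) ^ r / (r.factorial : ℂ))
        = ∑ k ∈ Finset.range (K + 1), ∑ l ∈ Finset.range (r + 1),
            Complex.I ^ r / (r.factorial : ℂ) *
              ((r.choose l : ℂ) * ((k : ℂ) ^ (j + 2 * r - l) / (K : ℂ) ^ (j + 2 * r - l) *
                Complex.exp (2 * Real.pi * Complex.I * ((a' * k + b' * k ^ 2 : ℝ) : ℂ))) *
                ((Δa : ℝ) : ℂ) ^ l * ((Δb : ℝ) : ℂ) ^ (r - l)) := by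
      refine Finset.sum_congr rfl fun k hk => ?_
      have hxk : ((x k : ℝ) : ℂ) = (Δa : ℂ) * ((k : ℂ) / (K : ℂ)) +
          (Δb : ℂ) * ((k : ℂ) / (K : ℂ)) ^ 2 := by
        simp [hx]
      rw [mul_pow, hxk, add_pow, Finset.mul_sum, Finset.mul_sum, Finset.sum_div]
      refine Finset.sum_congr rfl fun l hl => ?_
      have hl' : l ≤ r := Nat.lt_succ_iff.mp (Finset.mem_range.mp hl)
      have hrl : j + 2 * r - l = j + (l + 2 * (r - l)) := by omega
      have hcast : ((a' * (k:ℝ) + b' * (k:ℝ) ^ 2 : ℝ) : ℂ)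
          = (a' : ℂ) * (k : ℂ) + (b' : ℂ) * (k : ℂ) ^ 2 := by push_cast; ring
      simp only [hc]
      rw [hcast, hrl, pow_add, pow_add, pow_add, pow_add, pow_mul, pow_mul]
      ring
    rw [h1, h2, Finset.sum_comm]
  -- the limit of the series
  have hexp : ∀ k : ℕ, HasSum
      (fun r : ℕ => c k * (Complex.I * ((x k : ℝ) : ℂ)) ^ r / (r.factorial : ℂ))
      (c k * Complex.exp (Complex.I * ((x k : ℝ) : ℂ))) := by
    intro k
    have h := NormedSpace.expSeries_div_hasSum_exp (Complex.I * ((x k : ℝ) : ℂ))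
    rw [← Complex.exp_eq_exp_ℂ] at h
    simpa [mul_div_assoc] using h.mul_left (c k)
  have hFab : (∑ k ∈ Finset.range (K + 1),
      c k * Complex.exp (Complex.I * ((x k : ℝ) : ℂ))) = Fquad K j a b := by
    rw [Fquad, Finset.mul_sum]
    refine Finset.sum_congr rfl fun k hk => ?_
    have hE : 2 * (Real.pi : ℂ) * Complex.I * ((a' * k + b' * k ^ 2 : ℝ) : ℂ) +
        Complex.I * ((x k : ℝ) : ℂ)
        = 2 * (Real.pi : ℂ) * Complex.I * ((a * k + b * k ^ 2 : ℝ) : ℂ) := by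
      push_cast [hx, hΔa, hΔb]
      field_simp
      ring
    rw [hc, mul_assoc, ← Complex.exp_add, hE]
    ring
  have hsum : HasSum
      (fun r : ℕ =>
        Complex.I ^ r / (r.factorial : ℂ) *
          ∑ l ∈ Finset.range (r + 1), (r.choose l : ℂ) * Fquad K (j + 2 * r - l) a' b' *
            ((Δa : ℝ) : ℂ) ^ l * ((Δb : ℝ) : ℂ) ^ (r - l))
      (Fquad K j a b) := by
    rw [← hFab]
    have := hasSum_sum (f := fun k (r : ℕ) =>
      c k * (Complex.I * ((x k : ℝ) : ℂ)) ^ r / (r.factorial : ℂ))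
      (s := Finset.range (K + 1))
      (a := fun k => c k * Complex.exp (Complex.I * ((x k : ℝ) : ℂ)))
      (fun k _ => hexp k)
    convert this using 1
    funext r
    exact key r
  -- norm estimates
  have hnorm : ∀ (k r : ℕ),
      ‖c k * (Complex.I * ((x k : ℝ) : ℂ)) ^ r / (r.factorial : ℂ)‖
        = ‖c k‖ * |x k| ^ r / (r.factorial : ℝ) := by
    intro k r
    have hI : ‖Complex.I * ((x k : ℝ) : ℂ)‖ = |x k| := by
      simp [map_mul]
    rw [norm_div, norm_mul, norm_pow, hI, Complex.norm_natCast]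
  have hck : ∀ k ∈ Finset.range (K + 1), ‖c k‖ ≤ 1 := by
    intro k hk
    have hk' : (k : ℝ) ≤ K := by
      exact_mod_cast Nat.lt_succ_iff.mp (Finset.mem_range.mp hk)
    have h2 : 2 * (Real.pi : ℂ) * Complex.I * ((a' * k + b' * k ^ 2 : ℝ) : ℂ)
        = ((2 * Real.pi * (a' * k + b' * k ^ 2) : ℝ) : ℂ) * Complex.I := by
      push_cast; ring
    rw [hc]
    simp only [norm_mul, h2]
    rw [Complex.norm_exp_ofReal_mul_I, mul_one,
      norm_div, norm_pow, norm_pow, Complex.norm_natCast, Complex.norm_natCast]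
    rw [div_le_one (by positivity)]
    exact pow_le_pow_left₀ (Nat.cast_nonneg k) hk' j
  have hg : Summable
      (fun r : ℕ => ∑ k ∈ Finset.range (K + 1), ‖c k‖ * |x k| ^ r / (r.factorial : ℝ)) := by
    apply summable_sum
    intro k _
    simpa [mul_div_assoc] using (Real.summable_pow_div_factorial |x k|).mul_left ‖c k‖
  have hle : ∀ r : ℕ,
      ‖Complex.I ^ r / (r.factorial : ℂ) *
        ∑ l ∈ Finset.range (r + 1), (r.choose l : ℂ) * Fquad K (j + 2 * r - l) a' b' *
          ((Δa : ℝ) : ℂ) ^ l * ((Δb : ℝ) : ℂ) ^ (r - l)‖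
      ≤ ∑ k ∈ Finset.range (K + 1), ‖c k‖ * |x k| ^ r / (r.factorial : ℝ) := by
    intro r
    rw [key r]
    refine (norm_sum_le _ _).trans ?_
    exact Finset.sum_le_sum fun k _ => le_of_eq (hnorm k r)
  refine ⟨Summable.of_nonneg_of_le (fun r => norm_nonneg _) hle hg, hsum, ?_⟩
  · -- the bound
    intro ha hb r
    rw [key r]
    have hxb : ∀ k ∈ Finset.range (K + 1), |x k| ≤ 2 * Real.pi := by
      intro k hk
      have hk' : (k : ℝ) ≤ K := by
        exact_mod_cast Nat.lt_succ_iff.mp (Finset.mem_range.mp hk)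
      have h0 : (0:ℝ) ≤ (k : ℝ) / K := by positivity
      have h1 : (k : ℝ) / K ≤ 1 := by rw [div_le_one hKr]; exact hk'
      calc |x k| ≤ |Δa * ((k:ℝ)/K)| + |Δb * ((k:ℝ)/K)^2| := abs_add_le _ _
        _ = |Δa| * ((k:ℝ)/K) + |Δb| * ((k:ℝ)/K)^2 := by
            rw [abs_mul, abs_mul, abs_of_nonneg h0, abs_pow, abs_of_nonneg h0]
        _ ≤ Real.pi * 1 + Real.pi * 1 :=
            add_le_add (mul_le_mul ha h1 h0 Real.pi_pos.le)
              (mul_le_mul hb (pow_le_one₀ h0 h1) (by positivity) Real.pi_pos.le)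
        _ = 2 * Real.pi := by ring
    calc ‖∑ k ∈ Finset.range (K + 1),
          c k * (Complex.I * ((x k : ℝ) : ℂ)) ^ r / (r.factorial : ℂ)‖
        ≤ ∑ k ∈ Finset.range (K + 1), ‖c k‖ * |x k| ^ r / (r.factorial : ℝ) := by
          refine (norm_sum_le _ _).trans (Finset.sum_le_sum fun k _ => ?_)
          rw [hnorm]
      _ ≤ ∑ k ∈ Finset.range (K + 1), 1 * (2 * Real.pi) ^ r / (r.factorial : ℝ) := by
          refine Finset.sum_le_sum fun k hk => ?_
          have hfac : (0:ℝ) < r.factorial := by positivity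
          refine (div_le_div_iff_of_pos_right hfac).mpr ?_
          exact mul_le_mul (hck k hk) (pow_le_pow_left₀ (abs_nonneg _) (hxb k hk) r)
            (by positivity) zero_le_one
      _ = ((K : ℝ) + 1) * (2 * Real.pi) ^ r / (r.factorial : ℝ) := by
          rw [Finset.sum_const, Finset.card_range]
          simp only [nsmul_eq_mul]
          push_cast
          ring
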